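/- There is no continuous map h from the space L of lattices in ℝⁿ (n ≥ 2) to the space B of linear bases of ℝⁿ such that the lattice generated by h(Λ) equals Λ for every lattice Λ. Here B ⊂ ℝ^{n²} carries the Euclidean topology and L carries the quotient topology induced by the map g: B → L sending a basis to the lattice it generates. -/

import Mathlib

open Set

/-- The space of linear bases of `ℝⁿ`, as a subspace of `(ℝⁿ)ⁿ ≅ ℝ^{n²}` with the
Euclidean topology. -/
def BasisSpace (n : ℕ) : Type :=
  {v : Fin n → EuclideanSpace ℝ (Fin n) // LinearIndependent ℝ v ∧
    Submodule.span ℝ (Set.range v) = ⊤}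

noncomputable instance (n : ℕ) : TopologicalSpace (BasisSpace n) :=
  instTopologicalSpaceSubtype

/-- The lattice generated by a basis: all integer linear combinations of the basis vectors. -/
def latOf {n : ℕ} (b : BasisSpace n) : Set (EuclideanSpace ℝ (Fin n)) :=
  {x | ∃ c : Fin n → ℤ, x = ∑ i, (c i : ℝ) • b.1 i}

/-- Two bases are equivalent iff they generate the same lattice; the quotient is the
space of lattices `L` with the quotient topology. -/
def latticeSetoid (n : ℕ) : Setoid (BasisSpace n) :=
  ⟨fun b b' => latOf b = latOf b', ⟨fun _ => rfl, Eq.symm, Eq.trans⟩⟩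

/-! ### Auxiliary material: a shear path of bases -/

/-- The shear family of bases: row `i` is `eᵢ`, except row `1` which is `e₁ + t e₀`. -/
def shearVec (n : ℕ) (t : ℝ) : Fin n → EuclideanSpace ℝ (Fin n) :=
  fun i => WithLp.toLp 2 (fun j => (if j = i then (1 : ℝ) else 0) +
    (if i.val = 1 ∧ j.val = 0 then t else 0) : Fin n → ℝ)

lemma shearVec_apply (n : ℕ) (t : ℝ) (i j : Fin n) :
    shearVec n t i j = (if j = i then (1 : ℝ) else 0) +
      (if i.val = 1 ∧ j.val = 0 then t else 0) := rfl

lemma sum_smul_shearVec {n : ℕ} (hn : 2 ≤ n) (t : ℝ) (a : Fin n → ℝ) (j : Fin n) :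
    (∑ i, a i • shearVec n t i) j
      = a j + (if j.val = 0 then t * a ⟨1, by omega⟩ else 0) := by
  have h1 : (∑ i, a i • shearVec n t i) j = ∑ i, a i * shearVec n t i j := by
    rw [WithLp.ofLp_sum, Finset.sum_apply]; rfl
  rw [h1]
  have h2 : ∀ i : Fin n, a i * shearVec n t i j
      = (if i = j then a i else 0) + (if i = ⟨1, by omega⟩ ∧ j.val = 0 then a i * t else 0) := by
    intro i
    rw [shearVec_apply, mul_add]
    congr 1
    · by_cases hij : j = i <;> simp [hij, eq_comm]
    · have : i.val = 1 ↔ i = ⟨1, by omega⟩ := by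
        constructor
        · intro hv; exact Fin.ext hv
        · intro hv; rw [hv]
      by_cases hi : i = (⟨1, by omega⟩ : Fin n) <;> by_cases hj : j.val = 0 <;>
        simp [hi, hj, this, mul_comm]
  rw [Finset.sum_congr rfl (fun i _ => h2 i), Finset.sum_add_distrib]
  congr 1
  · simp
  · by_cases hj : j.val = 0
    · simp [hj, mul_comm]
    · simp [hj]

lemma shear_linearIndependent {n : ℕ} (hn : 2 ≤ n) (t : ℝ) :
    LinearIndependent ℝ (shearVec n t) := by
  rw [Fintype.linearIndependent_iff]
  intro g hg i
  have hcoord : ∀ j : Fin n, g j + (if j.val = 0 then t * g ⟨1, by omega⟩ else 0) = 0 := by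
    intro j
    have h0 : (∑ i, g i • shearVec n t i) j = (0 : EuclideanSpace ℝ (Fin n)) j := by rw [hg]
    rw [sum_smul_shearVec hn t g j] at h0
    exact h0
  have hg1 : g ⟨1, by omega⟩ = 0 := by
    have := hcoord ⟨1, by omega⟩
    simpa using this
  have := hcoord i
  rw [hg1] at this
  by_cases hi : i.val = 0 <;> simp [hi] at this <;> exact this

lemma shear_span {n : ℕ} (hn : 2 ≤ n) (t : ℝ) :
    Submodule.span ℝ (Set.range (shearVec n t)) = ⊤ := by
  have : Nonempty (Fin n) := ⟨⟨0, by omega⟩⟩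
  exact (shear_linearIndependent hn t).span_eq_top_of_card_eq_finrank
    (by simp [finrank_euclideanSpace_fin])

/-- The shear path in the space of bases. -/
noncomputable def shearB {n : ℕ} (hn : 2 ≤ n) (t : ℝ) : BasisSpace n :=
  ⟨shearVec n t, shear_linearIndependent hn t, shear_span hn t⟩

lemma mem_latOf_shearB {n : ℕ} (hn : 2 ≤ n) (t : ℝ) (x : EuclideanSpace ℝ (Fin n)) :
    x ∈ latOf (shearB hn t) ↔
      ∃ c : Fin n → ℤ, ∀ j : Fin n,
        x j = (c j : ℝ) + (if j.val = 0 then t * (c ⟨1, by omega⟩ : ℝ) else 0) := by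
  constructor
  · rintro ⟨c, rfl⟩
    exact ⟨c, fun j => by
      rw [show ((∑ i, ((c i : ℝ)) • (shearB hn t).1 i : EuclideanSpace ℝ (Fin n)) j)
          = (∑ i, ((c i : ℝ)) • shearVec n t i) j from rfl,
        sum_smul_shearVec hn t _ j]⟩
  · rintro ⟨c, hc⟩
    refine ⟨c, (WithLp.ext_iff 2).2 (funext fun j => ?_)⟩
    rw [hc j, show ((∑ i, ((c i : ℝ)) • (shearB hn t).1 i : EuclideanSpace ℝ (Fin n)) j)
        = (∑ i, ((c i : ℝ)) • shearVec n t i) j from rfl,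
      sum_smul_shearVec hn t _ j]

lemma latOf_shearB_zero_one {n : ℕ} (hn : 2 ≤ n) :
    latOf (shearB hn 0) = latOf (shearB hn 1) := by
  have hne : (⟨1, by omega⟩ : Fin n) ≠ ⟨0, by omega⟩ := by
    intro hcon
    have := congrArg Fin.val hcon
    simp at this
  ext x
  rw [mem_latOf_shearB hn 0 x, mem_latOf_shearB hn 1 x]
  constructor
  · rintro ⟨c, hc⟩
    refine ⟨fun j => if j = ⟨0, by omega⟩ then c ⟨0, by omega⟩ - c ⟨1, by omega⟩ else c j,
      fun j => ?_⟩
    have hx := hc j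
    by_cases hj : j = (⟨0, by omega⟩ : Fin n)
    · subst hj
      simp only [if_pos rfl, if_neg hne] at *
      push_cast
      simp at hx ⊢
      linarith
    · have hjv : ¬ j.val = 0 := fun hv => hj (Fin.ext hv)
      simp only [if_neg hj, if_neg hjv, add_zero] at *
      simpa using hx
  · rintro ⟨c, hc⟩
    refine ⟨fun j => if j = ⟨0, by omega⟩ then c ⟨0, by omega⟩ + c ⟨1, by omega⟩ else c j,
      fun j => ?_⟩
    have hx := hc j
    by_cases hj : j = (⟨0, by omega⟩ : Fin n)
    · subst hj
      simp only [if_pos rfl, if_neg hne] at *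
      push_cast
      simp at hx ⊢
      linarith
    · have hjv : ¬ j.val = 0 := fun hv => hj (Fin.ext hv)
      simp only [if_neg hj, if_neg hjv, add_zero] at *
      simpa using hx

lemma continuous_shearB {n : ℕ} (hn : 2 ≤ n) : Continuous fun t => shearB hn t := by
  apply Continuous.subtype_mk
  apply continuous_pi
  intro i
  show Continuous fun t => shearVec n t i
  have : Continuous fun t => (fun j => (if j = i then (1 : ℝ) else 0) +
      (if i.val = 1 ∧ j.val = 0 then t else 0) : Fin n → ℝ) := by
    apply continuous_pi
    intro j
    by_cases hP : i.val = 1 ∧ j.val = 0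
    · simp only [if_pos hP]
      exact continuous_const.add continuous_id
    · simp only [if_neg hP, add_zero]
      exact continuous_const
  exact (PiLp.continuous_toLp 2 _).comp this

/-- A continuous real function taking only integer values agrees at `0` and `1`. -/
lemma int_valued_const {f : ℝ → ℝ} (hf : Continuous f)
    (hint : ∀ t, ∃ m : ℤ, f t = m) : f 0 = f 1 := by
  by_contra hne
  obtain ⟨m0, hm0⟩ := hint 0
  obtain ⟨m1, hm1⟩ := hint 1
  have hmm : m0 ≠ m1 := by
    intro hcon; apply hne; rw [hm0, hm1, hcon]
  have key : ∀ y : ℝ, y ∈ Set.uIcc (f 0) (f 1) → False → True := fun _ _ _ => trivial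
  rcases le_total m0 m1 with hle | hle
  · have hlt : m0 + 1 ≤ m1 := by omega
    have hltR : (m0 : ℝ) + 1 ≤ (m1 : ℝ) := by exact_mod_cast hlt
    have hymem : (m0 : ℝ) + 1/2 ∈ Set.uIcc (f 0) (f 1) := by
      rw [Set.mem_uIcc, hm0, hm1]
      left
      constructor <;> linarith
    obtain ⟨t, _, ht⟩ := intermediate_value_uIcc hf.continuousOn hymem
    obtain ⟨m, hm⟩ := hint t
    rw [hm] at ht
    have h2 : (2 * m : ℝ) = 2 * (m0 : ℝ) + 1 := by linarith
    have h3 : (2 * m : ℤ) = 2 * m0 + 1 := by exact_mod_cast h2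
    omega
  · have hlt : m1 + 1 ≤ m0 := by omega
    have hltR : (m1 : ℝ) + 1 ≤ (m0 : ℝ) := by exact_mod_cast hlt
    have hymem : (m1 : ℝ) + 1/2 ∈ Set.uIcc (f 0) (f 1) := by
      rw [Set.mem_uIcc, hm0, hm1]
      right
      constructor <;> linarith
    obtain ⟨t, _, ht⟩ := intermediate_value_uIcc hf.continuousOn hymem
    obtain ⟨m, hm⟩ := hint t
    rw [hm] at ht
    have h2 : (2 * m : ℝ) = 2 * (m1 : ℝ) + 1 := by linarith
    have h3 : (2 * m : ℤ) = 2 * m1 + 1 := by exact_mod_cast h2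
    omega

/-- Discontinuity of reduced cells: for `n ≥ 2` there is no continuous map `h : L → B`
from the space of lattices in `ℝⁿ` to the space of bases with `g ∘ h = id`, i.e. such that
`h(Λ)` generates `Λ` for every lattice `Λ`. -/
theorem no_continuous_basis_reduction {n : ℕ} (hn : 2 ≤ n) :
    ¬ ∃ h : Quotient (latticeSetoid n) → BasisSpace n,
      Continuous h ∧ ∀ l : Quotient (latticeSetoid n), Quotient.mk (latticeSetoid n) (h l) = l := by
  rintro ⟨h, hcont, hsec⟩
  set i0 : Fin n := ⟨0, by omega⟩ with hi0
  set i1 : Fin n := ⟨1, by omega⟩ with hi1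
  set p : ℝ → Quotient (latticeSetoid n) := fun t => Quotient.mk (latticeSetoid n) (shearB hn t)
    with hp
  have hp01 : p 0 = p 1 := Quotient.sound (latOf_shearB_zero_one hn)
  have hpcont : Continuous p := continuous_quot_mk.comp (continuous_shearB hn)
  -- coordinates of h (p t) along the shear basis
  have hint : ∀ (i : Fin n) (t : ℝ), ∃ m : ℤ,
      (h (p t)).1 i i0 - t * (h (p t)).1 i i1 = m := by
    intro i t
    have hrel : latOf (h (p t)) = latOf (shearB hn t) := Quotient.exact (hsec (p t))
    have hmem : (h (p t)).1 i ∈ latOf (h (p t)) := by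
      refine ⟨fun k => if k = i then 1 else 0, ?_⟩
      have hsingle : ∀ k : Fin n, (((if k = i then 1 else 0 : ℤ)) : ℝ) • (h (p t)).1 k
          = if k = i then (h (p t)).1 k else 0 := by
        intro k
        by_cases hk : k = i <;> simp [hk]
      rw [Finset.sum_congr rfl (fun k _ => hsingle k), Finset.sum_ite_eq' Finset.univ i]
      simp
    rw [hrel, mem_latOf_shearB hn t] at hmem
    obtain ⟨c, hc⟩ := hmem
    have h0 := hc i0
    have h1 := hc i1
    have hv0 : (i0 : Fin n).val = 0 := rfl
    have hv1 : ¬ (i1 : Fin n).val = 0 := by simp [hi1]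
    rw [if_pos hv0] at h0
    rw [if_neg hv1, add_zero] at h1
    exact ⟨c i0, by rw [h0, h1]; ring⟩
  -- continuity of these coordinate functions
  have hfc : ∀ i : Fin n, Continuous fun t => (h (p t)).1 i i0 - t * (h (p t)).1 i i1 := by
    intro i
    have hb : Continuous fun t => (h (p t)).1 i := by
      exact (continuous_apply i).comp (continuous_subtype_val.comp (hcont.comp hpcont))
    have hco : ∀ j : Fin n, Continuous fun t => (h (p t)).1 i j := by
      intro j
      exact (EuclideanSpace.proj j).continuous.comp hb
    exact (hco i0).sub (continuous_id.mul (hco i1))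
  -- hence they are constant on [0,1]
  have hconst : ∀ i : Fin n,
      (h (p 0)).1 i i0 - 0 * (h (p 0)).1 i i1
        = (h (p 1)).1 i i0 - 1 * (h (p 1)).1 i i1 :=
    fun i => int_valued_const (hfc i) (hint i)
  -- since p 0 = p 1, the second coordinate of every basis vector of h (p 1) vanishes
  have hzero : ∀ i : Fin n, (h (p 1)).1 i i1 = 0 := by
    intro i
    have := hconst i
    rw [hp01] at this
    linarith
  -- contradiction with spanning
  have hspan := (h (p 1)).2.2
  have hmem : EuclideanSpace.single i1 (1 : ℝ)
      ∈ Submodule.span ℝ (Set.range (h (p 1)).1) := by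
    rw [hspan]; trivial
  have hle : Submodule.span ℝ (Set.range (h (p 1)).1)
      ≤ LinearMap.ker ((EuclideanSpace.proj (𝕜 := ℝ) i1 : _ →L[ℝ] ℝ) : _ →ₗ[ℝ] ℝ) := by
    rw [Submodule.span_le]
    rintro _ ⟨i, rfl⟩
    show EuclideanSpace.proj i1 ((h (p 1)).1 i) = 0
    exact hzero i
  have := hle hmem
  rw [LinearMap.mem_ker] at this
  rw [show ((EuclideanSpace.proj (𝕜 := ℝ) i1 : _ →L[ℝ] ℝ) : _ →ₗ[ℝ] ℝ) (EuclideanSpace.single i1 (1:ℝ))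
      = EuclideanSpace.single i1 (1:ℝ) i1 from rfl, EuclideanSpace.single_apply,
    if_pos rfl] at this
  exact one_ne_zero this
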